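/- Good containment function for interacting species with immigration and harvesting (Lemma 5.8): Let E = [0,∞)^d and s(x) = Σ_{i=1}^d x_i. Let T_int ⊆ ℤ^d be a finite set, let r_Γ : E → [0,∞) for Γ ∈ T_int and a_i, b_i : E → (0,∞) for i = 1,…,d be continuous, and suppose there exist C > 0 and M ≥ e such that for all x with s(x) ≥ M: r_Γ(x) ≤ C·s(x)·log s(x) for every Γ ∈ T_int with Σ_i Γ_i > 0, and a_i(x) + b_i(x) ≤ C·s(x)·log s(x) for every i. Define H_0(x,p) = Σ_{Γ∈T_int} r_Γ(x)(e^{⟨Γ,p⟩} − 1), and for J ⊆ {1,…,d} and x ∈ E_J = {x ∈ E : x_i = 0 for i ∈ J}: H_J(x,p) = H_0(x,p) + Σ_{k∈J} a_k(x)(e^{p_k} − 1) + Σ_{l∉J} [a_l(x)(e^{p_l} − 1) + b_l(x)(e^{−p_l} − 1)]. Then there exists a twice continuously differentiable Υ : E → [0,∞) with Υ(x₀) = 0 for some x₀ ∈ E, {x ∈ E : Υ(x) ≤ c} compact for every c ≥ 0, and max_{J⊆{1,…,d}} sup_{x∈E_J} H_J(x, ∇Υ(x)) < ∞. -/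

import Mathlib

open Set Filter

set_option maxHeartbeats 1000000
noncomputable section

/-- `ℝ^d` with the Euclidean structure. -/
abbrev Euc (d : ℕ) := EuclideanSpace ℝ (Fin d)

/-- The nonnegative orthant `E = [0,∞)^d`. -/
def orthant (d : ℕ) : Set (Euc d) := {x | ∀ i, 0 ≤ x i}

/-- `E_J = {x ∈ E : x_i = 0 for all i ∈ J}`. -/
def orthantEJ (d : ℕ) (J : Finset (Fin d)) : Set (Euc d) :=
  {x ∈ orthant d | ∀ i ∈ J, x i = 0}

/-! ### Auxiliary one-dimensional functions -/

def phiF (u : ℝ) : ℝ := Real.log (1 + Real.log (1 + u^2))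
def psiF (u : ℝ) : ℝ := (2*u/(1+u^2)) / (1 + Real.log (1+u^2))

lemma log_sq_nonneg (u : ℝ) : 0 ≤ Real.log (1 + u^2) :=
  Real.log_nonneg (by nlinarith [sq_nonneg u])

lemma den_pos (u : ℝ) : 0 < 1 + Real.log (1 + u^2) := by
  linarith [log_sq_nonneg u]

lemma one_add_sq_pos (u : ℝ) : 0 < 1 + u^2 := by nlinarith [sq_nonneg u]

lemma phiF_nonneg (u : ℝ) : 0 ≤ phiF u :=
  Real.log_nonneg (by linarith [log_sq_nonneg u])

lemma phiF_zero : phiF 0 = 0 := by simp [phiF]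

lemma hasDerivAt_phiF (u : ℝ) : HasDerivAt phiF (psiF u) u := by
  have h1 : HasDerivAt (fun t : ℝ => 1 + t^2) (2*u) u := by
    simpa using ((hasDerivAt_pow 2 u).const_add 1)
  have h2 : HasDerivAt (fun t : ℝ => Real.log (1 + t^2)) (2*u/(1+u^2)) u := by
    have := (Real.hasDerivAt_log (ne_of_gt (one_add_sq_pos u))).comp u h1
    simpa [Function.comp_def, div_eq_mul_inv, mul_comm] using this
  have h3 : HasDerivAt (fun t : ℝ => 1 + Real.log (1 + t^2)) (2*u/(1+u^2)) u := h2.const_add 1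
  have h4 := (Real.hasDerivAt_log (ne_of_gt (den_pos u))).comp u h3
  show HasDerivAt (fun t => Real.log (1 + Real.log (1 + t^2))) (psiF u) u
  simpa [psiF, Function.comp_def, div_eq_inv_mul, mul_comm] using h4

lemma contDiff_phiF : ContDiff ℝ 2 phiF := by
  have h1 : ContDiff ℝ 2 (fun t : ℝ => 1 + t^2) := by fun_prop
  have h2 : ContDiff ℝ 2 (fun t : ℝ => 1 + Real.log (1 + t^2)) :=
    contDiff_const.add (h1.log (fun t => ne_of_gt (one_add_sq_pos t)))
  exact h2.log (fun t => ne_of_gt (den_pos t))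

lemma psiF_nonneg {u : ℝ} (hu : 0 ≤ u) : 0 ≤ psiF u :=
  div_nonneg (div_nonneg (by linarith) (one_add_sq_pos u).le) (den_pos u).le

lemma psiF_le_one {u : ℝ} (hu : 0 ≤ u) : psiF u ≤ 1 := by
  have h1 : 2*u/(1+u^2) ≤ 1 := by
    rw [div_le_one (one_add_sq_pos u)]; nlinarith [sq_nonneg (1-u)]
  have h2 : psiF u ≤ 2*u/(1+u^2) := by
    apply div_le_self (div_nonneg (by linarith) (one_add_sq_pos u).le)
    linarith [log_sq_nonneg u]
  linarith

lemma psiF_bound {u : ℝ} (hu : Real.exp 1 ≤ u) : u * Real.log u * psiF u ≤ 1 := by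
  have hu1 : (1:ℝ) ≤ u := le_trans (by linarith [Real.add_one_le_exp (1:ℝ)]) hu
  have hu0 : 0 < u := by linarith
  have hlogu : 1 ≤ Real.log u := by
    rw [Real.le_log_iff_exp_le hu0]; exact hu
  have hlog2 : 2 * Real.log u ≤ 1 + Real.log (1 + u^2) := by
    have : Real.log (u^2) ≤ Real.log (1 + u^2) :=
      Real.log_le_log (by positivity) (by linarith)
    rw [Real.log_pow] at this
    push_cast at this
    linarith
  have hden : 2 * (u * Real.log u) * u ≤ (1+u^2) * (1 + Real.log (1+u^2)) := by
    have h1 : u^2 ≤ 1 + u^2 := by linarith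
    have h2 : (0:ℝ) ≤ 2 * Real.log u := by linarith
    calc 2 * (u * Real.log u) * u = u^2 * (2 * Real.log u) := by ring
    _ ≤ (1+u^2) * (1 + Real.log (1+u^2)) := by
        apply mul_le_mul h1 hlog2 h2 (by positivity)
  have hpsi : psiF u ≤ 1 / (u * Real.log u) := by
    rw [psiF, div_div]
    rw [div_le_div_iff₀ (mul_pos (one_add_sq_pos u) (den_pos u))
      (mul_pos hu0 (by linarith))]
    nlinarith
  have hpos : 0 < u * Real.log u := by positivity
  calc u * Real.log u * psiF u ≤ u * Real.log u * (1/(u*Real.log u)) :=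
        mul_le_mul_of_nonneg_left hpsi hpos.le
  _ = 1 := by field_simp

lemma exp_sub_one_le (t : ℝ) : Real.exp t - 1 ≤ t * Real.exp t := by
  have h := Real.add_one_le_exp (-t)
  have h2 : Real.exp (-t) * Real.exp t = 1 := by
    rw [← Real.exp_add]; simp
  nlinarith [Real.exp_pos t]

/-! ### The containment function on `Euc d` -/

def sumL (d : ℕ) : Euc d →L[ℝ] ℝ := ∑ i, EuclideanSpace.proj i

lemma sumL_apply {d : ℕ} (x : Euc d) : sumL d x = ∑ i, x i := by
  simp [sumL]

def Ups (d : ℕ) (x : Euc d) : ℝ := phiF (∑ i, x i)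

lemma contDiff_Ups (d : ℕ) : ContDiff ℝ 2 (Ups d) := by
  have h : ContDiff ℝ 2 (fun x : Euc d => ∑ i, x i) := by
    have heq : (fun x : Euc d => ∑ i, x i) = ⇑(sumL d) := by
      funext x; rw [sumL_apply]
    rw [heq]; exact (sumL d).contDiff
  exact contDiff_phiF.comp h

def onesV (d : ℕ) : Euc d := (EuclideanSpace.equiv (Fin d) ℝ).symm (fun _ => 1)

lemma hasGradientAt_Ups {d : ℕ} (x : Euc d) :
    HasGradientAt (Ups d) (psiF (∑ i, x i) • onesV d) x := by
  have hL : HasFDerivAt (Ups d) (psiF (∑ i, x i) • sumL d) x := by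
    have h1 : HasFDerivAt (fun y : Euc d => sumL d y) (sumL d) x := (sumL d).hasFDerivAt
    have h2 := (hasDerivAt_phiF (sumL d x)).comp_hasFDerivAt x h1
    have heq : Ups d = phiF ∘ (sumL d) := by
      funext y; simp [Ups, Function.comp, sumL_apply]
    rw [heq]
    simpa only [sumL_apply] using h2
  have hdual : (InnerProductSpace.toDual ℝ (Euc d)) (psiF (∑ i, x i) • onesV d)
      = psiF (∑ i, x i) • sumL d := by
    apply ContinuousLinearMap.ext
    intro y
    simp [sumL_apply, onesV, EuclideanSpace.inner_eq_star_dotProduct, dotProduct]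
  rw [HasGradientAt, HasGradientAtFilter, hdual]
  exact hL

lemma gradient_Ups {d : ℕ} (x : Euc d) (i : Fin d) :
    gradient (Ups d) x i = psiF (∑ j, x j) := by
  rw [(hasGradientAt_Ups x).gradient]
  simp [onesV]

lemma isClosed_orthant (d : ℕ) : IsClosed (orthant d) := by
  have h : orthant d = ⋂ i, {x : Euc d | 0 ≤ x i} := by
    ext x; simp [orthant, Set.mem_iInter]
  rw [h]
  exact isClosed_iInter fun i =>
    isClosed_le continuous_const (EuclideanSpace.proj i).continuous

lemma orthant_sum_compact (d : ℕ) (M : ℝ) (hM : 0 ≤ M) :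
    IsCompact {x ∈ orthant d | ∑ i, x i ≤ M} := by
  apply Metric.isCompact_of_isClosed_isBounded
  · apply (isClosed_orthant d).inter
    have hc : Continuous (fun x : Euc d => ∑ i, x i) := by
      have heq2 : (fun x : Euc d => ∑ i, x i) = ⇑(sumL d) := by
        funext x; rw [sumL_apply]
      rw [heq2]; exact (sumL d).continuous
    exact isClosed_le hc continuous_const
  · rw [Metric.isBounded_iff_subset_closedBall 0]
    refine ⟨M, fun x hx => ?_⟩
    obtain ⟨hxo, hxc⟩ := hx
    simp only [Metric.mem_closedBall, dist_zero_right]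
    rw [EuclideanSpace.norm_eq]
    have hsum : ∑ i, ‖x i‖^2 ≤ M^2 := by
      calc ∑ i, ‖x i‖^2 = ∑ i, (x i)^2 := by
            refine Finset.sum_congr rfl fun i _ => ?_
            rw [Real.norm_eq_abs, sq_abs]
      _ ≤ (∑ i, x i)^2 := Finset.sum_sq_le_sq_sum_of_nonneg fun i _ => hxo i
      _ ≤ M^2 := by
          have h0 : 0 ≤ ∑ i, x i := Finset.sum_nonneg fun i _ => hxo i
          nlinarith
    calc Real.sqrt (∑ i, ‖x i‖^2) ≤ Real.sqrt (M^2) := Real.sqrt_le_sqrt hsum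
    _ = M := Real.sqrt_sq hM

lemma sublevel_compact (d : ℕ) (c : ℝ) :
    IsCompact {x ∈ orthant d | Ups d x ≤ c} := by
  have hsub : {x ∈ orthant d | Ups d x ≤ c}
      ⊆ {x ∈ orthant d | ∑ i, x i ≤ Real.exp (Real.exp c)} := by
    rintro x ⟨hxo, hxc⟩
    refine ⟨hxo, ?_⟩
    set u := ∑ i, x i with hu
    have hunn : 0 ≤ u := Finset.sum_nonneg fun i _ => hxo i
    have h1 : 1 + Real.log (1 + u^2) ≤ Real.exp c := by
      rw [← Real.log_le_iff_le_exp (den_pos u)]; exact hxc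
    have h2 : 1 + u^2 ≤ Real.exp (Real.exp c) := by
      rw [← Real.log_le_iff_le_exp (by positivity)]
      nlinarith [Real.add_one_le_exp (Real.exp c - 1), Real.exp_pos (Real.exp c)]
    nlinarith [Real.exp_pos (Real.exp c)]
  have hclosed : IsClosed {x ∈ orthant d | Ups d x ≤ c} :=
    (isClosed_orthant d).inter
      (isClosed_le ((contDiff_Ups d).continuous) continuous_const)
  exact (orthant_sum_compact d _ (Real.exp_pos _).le).of_isClosed_subset hclosed hsub

/-- Good containment function for interacting species with immigration and harvesting
(Lemma 5.8): under the stated growth conditions on the rates `r_Γ`, `a_i`, `b_i`, the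
generating set of Hamiltonians `{H_J}` admits a good containment function `Υ`. -/
theorem interacting_species_good_containment {d : ℕ}
    (T : Finset (Fin d → ℤ))
    (r : (Fin d → ℤ) → Euc d → ℝ) (a b : Fin d → Euc d → ℝ)
    (hrc : ∀ Γ ∈ T, ContinuousOn (r Γ) (orthant d))
    (hrnn : ∀ Γ ∈ T, ∀ x ∈ orthant d, 0 ≤ r Γ x)
    (hac : ∀ i, ContinuousOn (a i) (orthant d))
    (hbc : ∀ i, ContinuousOn (b i) (orthant d))
    (hapos : ∀ i, ∀ x ∈ orthant d, 0 < a i x)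
    (hbpos : ∀ i, ∀ x ∈ orthant d, 0 < b i x)
    (hgrowth : ∃ C > (0:ℝ), ∃ M ≥ Real.exp 1, ∀ x ∈ orthant d,
      M ≤ ∑ i, x i →
        (∀ Γ ∈ T, 0 < ∑ i, Γ i →
          r Γ x ≤ C * (∑ i, x i) * Real.log (∑ i, x i)) ∧
        (∀ i, a i x + b i x ≤ C * (∑ i, x i) * Real.log (∑ i, x i))) :
    ∃ Υ : Euc d → ℝ, ContDiff ℝ 2 Υ ∧ (∀ x ∈ orthant d, 0 ≤ Υ x) ∧
      (∃ x₀ ∈ orthant d, Υ x₀ = 0) ∧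
      (∀ c : ℝ, 0 ≤ c → IsCompact {x ∈ orthant d | Υ x ≤ c}) ∧
      ∃ C' : ℝ, ∀ J : Finset (Fin d), ∀ x ∈ orthantEJ d J,
        ((∑ Γ ∈ T, r Γ x *
            (Real.exp (∑ i, (Γ i : ℝ) * gradient Υ x i) - 1)) +
          (∑ k ∈ J, a k x * (Real.exp (gradient Υ x k) - 1)) +
          (∑ l ∈ Jᶜ, (a l x * (Real.exp (gradient Υ x l) - 1) +
            b l x * (Real.exp (-(gradient Υ x l)) - 1)))) ≤ C' := by
  obtain ⟨C, hC, M, hM, hbound⟩ := hgrowth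
  refine ⟨Ups d, contDiff_Ups d, fun x _ => phiF_nonneg _, ?_, fun c _ => sublevel_compact d c, ?_⟩
  · refine ⟨0, fun i => le_refl 0, ?_⟩
    simp [Ups, phiF_zero]
  -- the main bound
  set N : ℝ := 1 + ∑ Γ ∈ T, |((∑ i, Γ i : ℤ) : ℝ)| with hN
  have hN1 : (1:ℝ) ≤ N := by
    have h0 : 0 ≤ ∑ Γ ∈ T, |((∑ i, Γ i : ℤ) : ℝ)| :=
      Finset.sum_nonneg fun Γ _ => abs_nonneg _
    rw [hN]; linarith
  have hN0 : (0:ℝ) < N := lt_of_lt_of_le one_pos hN1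
  have hGamN : ∀ Γ ∈ T, |((∑ i, Γ i : ℤ) : ℝ)| ≤ N := by
    intro Γ hΓ
    have h1 : |((∑ i, Γ i : ℤ) : ℝ)| ≤ ∑ Γ' ∈ T, |((∑ i, Γ' i : ℤ) : ℝ)| :=
      Finset.single_le_sum (f := fun Γ' => |((∑ i, Γ' i : ℤ) : ℝ)|)
        (fun Γ' _ => abs_nonneg _) hΓ
    linarith
  -- compactness bound for the small region
  set K := {x ∈ orthant d | ∑ i, x i ≤ M} with hK
  have hKcompact : IsCompact K := orthant_sum_compact d M (le_trans (Real.exp_pos 1).le hM)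
  set F : Euc d → ℝ := fun x =>
    Real.exp N * (∑ Γ ∈ T, r Γ x) + Real.exp 1 * (∑ i, a i x) with hF
  have hFcont : ContinuousOn F K := by
    apply ContinuousOn.add
    · exact (continuousOn_const.mul
        (ContinuousOn.mono (continuousOn_finset_sum T fun Γ hΓ => hrc Γ hΓ)
          (fun x hx => hx.1)))
    · exact (continuousOn_const.mul
        (ContinuousOn.mono (continuousOn_finset_sum Finset.univ fun i _ => hac i)
          (fun x hx => hx.1)))
  obtain ⟨C2, hC2⟩ := hKcompact.exists_bound_of_continuousOn hFcont
  set C1 : ℝ := (T.card : ℝ) * (C * N * Real.exp N) + (d : ℝ) * (C * Real.exp 1) with hC1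
  refine ⟨max C1 C2, ?_⟩
  rintro J x ⟨hxo, -⟩
  set u := ∑ i, x i with hu
  have hunn : 0 ≤ u := Finset.sum_nonneg fun i _ => hxo i
  set p := psiF u with hp
  have hp0 : 0 ≤ p := psiF_nonneg hunn
  have hp1 : p ≤ 1 := psiF_le_one hunn
  -- rewrite the gradient everywhere
  have hgrad : ∀ i, gradient (Ups d) x i = p := fun i => gradient_Ups x i
  have hsum_rw : ∀ Γ : Fin d → ℤ,
      (∑ i, (Γ i : ℝ) * p) = ((∑ i, Γ i : ℤ) : ℝ) * p := by
    intro Γ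
    rw [← Finset.sum_mul]
    push_cast
    ring
  simp only [hgrad, hsum_rw]
  by_cases hcase : M ≤ u
  · -- large region
    have hb := hbound x hxo hcase
    have hue : Real.exp 1 ≤ u := le_trans hM hcase
    have hlogu1 : 1 ≤ Real.log u := by
      rw [Real.le_log_iff_exp_le (lt_of_lt_of_le (Real.exp_pos 1) hue)]
      exact hue
    have hulogu : 0 < u * Real.log u := by
      have : 0 < u := lt_of_lt_of_le (Real.exp_pos 1) hue
      nlinarith
    have hkey : u * Real.log u * p ≤ 1 := psiF_bound hue
    -- bound on a-type terms
    have haterm : ∀ k : Fin d, a k x * (Real.exp p - 1) ≤ C * Real.exp 1 := by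
      intro k
      have hak : a k x ≤ C * u * Real.log u := by
        have := (hb.2 k)
        have hbk := hbpos k x hxo
        linarith
      have hexp : Real.exp p - 1 ≤ p * Real.exp 1 := by
        have h1 := exp_sub_one_le p
        have h2 : Real.exp p ≤ Real.exp 1 := Real.exp_le_exp.mpr hp1
        nlinarith [Real.exp_pos p]
      calc a k x * (Real.exp p - 1) ≤ (C * u * Real.log u) * (p * Real.exp 1) := by
            apply mul_le_mul hak hexp _ (by positivity)
            nlinarith [Real.exp_pos p, Real.add_one_le_exp p]
      _ = (C * Real.exp 1) * (u * Real.log u * p) := by ring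
      _ ≤ (C * Real.exp 1) * 1 := by
            apply mul_le_mul_of_nonneg_left hkey (by positivity)
      _ = C * Real.exp 1 := mul_one _
    -- bound on r-type terms
    have hrterm : ∀ Γ ∈ T, r Γ x * (Real.exp (((∑ i, Γ i : ℤ) : ℝ) * p) - 1)
        ≤ C * N * Real.exp N := by
      intro Γ hΓ
      by_cases hsign : 0 < ∑ i, Γ i
      · have hrΓ : r Γ x ≤ C * u * Real.log u := by
          have := hb.1 Γ hΓ hsign
          linarith
        set g : ℝ := ((∑ i, Γ i : ℤ) : ℝ) * p with hg
        have hgpos : 0 ≤ g := by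
          apply mul_nonneg _ hp0
          exact_mod_cast hsign.le
        have hΓle : ((∑ i, Γ i : ℤ) : ℝ) ≤ N :=
          le_trans (le_abs_self _) (hGamN Γ hΓ)
        have hgN : g ≤ N := by
          calc g ≤ ((∑ i, Γ i : ℤ) : ℝ) * 1 := by
                apply mul_le_mul_of_nonneg_left hp1
                exact_mod_cast hsign.le
          _ = ((∑ i, Γ i : ℤ) : ℝ) := mul_one _
          _ ≤ N := hΓle
        have hexpg : Real.exp g - 1 ≤ g * Real.exp N := by
          have h1 := exp_sub_one_le g
          have h2 : Real.exp g ≤ Real.exp N := Real.exp_le_exp.mpr hgN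
          nlinarith
        have hexpg0 : 0 ≤ Real.exp g - 1 := by
          nlinarith [Real.add_one_le_exp g]
        calc r Γ x * (Real.exp g - 1)
            ≤ (C * u * Real.log u) * (g * Real.exp N) := by
              apply mul_le_mul hrΓ hexpg hexpg0 (by positivity)
        _ = (C * Real.exp N * ((∑ i, Γ i : ℤ) : ℝ)) * (u * Real.log u * p) := by
              rw [hg]; ring
        _ ≤ (C * Real.exp N * ((∑ i, Γ i : ℤ) : ℝ)) * 1 := by
              apply mul_le_mul_of_nonneg_left hkey
              apply mul_nonneg (by positivity)
              exact_mod_cast hsign.le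
        _ = C * Real.exp N * ((∑ i, Γ i : ℤ) : ℝ) := mul_one _
        _ ≤ C * Real.exp N * N := by
              apply mul_le_mul_of_nonneg_left hΓle (by positivity)
        _ = C * N * Real.exp N := by ring
      · -- nonpositive jump sum: the term is ≤ 0
        have hle : ((∑ i, Γ i : ℤ) : ℝ) ≤ 0 := by
          push_neg at hsign
          exact_mod_cast hsign
        have hgle : ((∑ i, Γ i : ℤ) : ℝ) * p ≤ 0 := mul_nonpos_of_nonpos_of_nonneg hle hp0
        have hexple : Real.exp (((∑ i, Γ i : ℤ) : ℝ) * p) ≤ 1 := by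
          rw [← Real.exp_zero]
          exact Real.exp_le_exp.mpr hgle
        have : r Γ x * (Real.exp (((∑ i, Γ i : ℤ) : ℝ) * p) - 1) ≤ 0 :=
          mul_nonpos_of_nonneg_of_nonpos (hrnn Γ hΓ x hxo) (by linarith)
        have hCN : 0 ≤ C * N * Real.exp N := by positivity
        linarith
    -- b-type terms are nonpositive
    have hbterm : ∀ l : Fin d, b l x * (Real.exp (-p) - 1) ≤ 0 := by
      intro l
      apply mul_nonpos_of_nonneg_of_nonpos (hbpos l x hxo).le
      have : Real.exp (-p) ≤ 1 := by
        rw [← Real.exp_zero]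
        exact Real.exp_le_exp.mpr (by linarith)
      linarith
    have hS1 : (∑ Γ ∈ T, r Γ x * (Real.exp (((∑ i, Γ i : ℤ) : ℝ) * p) - 1))
        ≤ (T.card : ℝ) * (C * N * Real.exp N) := by
      calc (∑ Γ ∈ T, r Γ x * (Real.exp (((∑ i, Γ i : ℤ) : ℝ) * p) - 1))
          ≤ ∑ _Γ ∈ T, C * N * Real.exp N := Finset.sum_le_sum hrterm
      _ = (T.card : ℝ) * (C * N * Real.exp N) := by
          rw [Finset.sum_const, nsmul_eq_mul]
    have hS2 : (∑ k ∈ J, a k x * (Real.exp p - 1)) +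
        (∑ l ∈ Jᶜ, (a l x * (Real.exp p - 1) + b l x * (Real.exp (-p) - 1)))
        ≤ (d : ℝ) * (C * Real.exp 1) := by
      have h1 : (∑ k ∈ J, a k x * (Real.exp p - 1)) ≤ ∑ _k ∈ J, C * Real.exp 1 :=
        Finset.sum_le_sum fun k _ => haterm k
      have h2 : (∑ l ∈ Jᶜ, (a l x * (Real.exp p - 1) + b l x * (Real.exp (-p) - 1)))
          ≤ ∑ _l ∈ Jᶜ, C * Real.exp 1 := by
        apply Finset.sum_le_sum
        intro l _
        have := haterm l
        have := hbterm l
        linarith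
      have hcardn : J.card + Jᶜ.card = d := by
        simpa [Fintype.card_fin] using Finset.card_add_card_compl J
      have hcard : (J.card : ℝ) + (Jᶜ.card : ℝ) = d := by exact_mod_cast hcardn
      calc (∑ k ∈ J, a k x * (Real.exp p - 1)) +
          (∑ l ∈ Jᶜ, (a l x * (Real.exp p - 1) + b l x * (Real.exp (-p) - 1)))
          ≤ (∑ _k ∈ J, C * Real.exp 1) + (∑ _l ∈ Jᶜ, C * Real.exp 1) := add_le_add h1 h2
      _ = ((J.card : ℝ) + (Jᶜ.card : ℝ)) * (C * Real.exp 1) := by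
          rw [Finset.sum_const, Finset.sum_const, nsmul_eq_mul, nsmul_eq_mul]; ring
      _ = (d : ℝ) * (C * Real.exp 1) := by rw [hcard]
    have : C1 ≤ max C1 C2 := le_max_left _ _
    simp only [hC1] at this
    linarith
  · -- small region: x ∈ K
    push_neg at hcase
    have hxK : x ∈ K := ⟨hxo, hcase.le⟩
    have hFb : F x ≤ C2 := le_trans (le_abs_self _) (hC2 x hxK)
    -- termwise bounds
    have hrterm : ∀ Γ ∈ T, r Γ x * (Real.exp (((∑ i, Γ i : ℤ) : ℝ) * p) - 1)
        ≤ Real.exp N * r Γ x := by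
      intro Γ hΓ
      have habs : ((∑ i, Γ i : ℤ) : ℝ) * p ≤ N := by
        calc ((∑ i, Γ i : ℤ) : ℝ) * p ≤ |((∑ i, Γ i : ℤ) : ℝ) * p| := le_abs_self _
        _ = |((∑ i, Γ i : ℤ) : ℝ)| * |p| := abs_mul _ _
        _ ≤ N * 1 := by
            apply mul_le_mul (hGamN Γ hΓ) (by rw [abs_of_nonneg hp0]; exact hp1)
              (abs_nonneg _) hN0.le
        _ = N := mul_one _
      have : Real.exp (((∑ i, Γ i : ℤ) : ℝ) * p) - 1 ≤ Real.exp N :=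
        le_trans (by linarith [Real.exp_le_exp.mpr habs]) (le_refl _)
      calc r Γ x * (Real.exp (((∑ i, Γ i : ℤ) : ℝ) * p) - 1)
          ≤ r Γ x * Real.exp N :=
            mul_le_mul_of_nonneg_left this (hrnn Γ hΓ x hxo)
      _ = Real.exp N * r Γ x := mul_comm _ _
    have haterm : ∀ k : Fin d, a k x * (Real.exp p - 1) ≤ Real.exp 1 * a k x := by
      intro k
      have : Real.exp p - 1 ≤ Real.exp 1 := by
        linarith [Real.exp_le_exp.mpr hp1]
      calc a k x * (Real.exp p - 1) ≤ a k x * Real.exp 1 :=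
            mul_le_mul_of_nonneg_left this (hapos k x hxo).le
      _ = Real.exp 1 * a k x := mul_comm _ _
    have hbterm : ∀ l : Fin d, b l x * (Real.exp (-p) - 1) ≤ 0 := by
      intro l
      apply mul_nonpos_of_nonneg_of_nonpos (hbpos l x hxo).le
      have : Real.exp (-p) ≤ 1 := by
        rw [← Real.exp_zero]
        exact Real.exp_le_exp.mpr (by linarith)
      linarith
    have hS1 : (∑ Γ ∈ T, r Γ x * (Real.exp (((∑ i, Γ i : ℤ) : ℝ) * p) - 1))
        ≤ Real.exp N * (∑ Γ ∈ T, r Γ x) := by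
      rw [Finset.mul_sum]
      exact Finset.sum_le_sum hrterm
    have hS2 : (∑ k ∈ J, a k x * (Real.exp p - 1)) +
        (∑ l ∈ Jᶜ, (a l x * (Real.exp p - 1) + b l x * (Real.exp (-p) - 1)))
        ≤ Real.exp 1 * (∑ i, a i x) := by
      have h1 : (∑ k ∈ J, a k x * (Real.exp p - 1)) ≤ ∑ k ∈ J, Real.exp 1 * a k x :=
        Finset.sum_le_sum fun k _ => haterm k
      have h2 : (∑ l ∈ Jᶜ, (a l x * (Real.exp p - 1) + b l x * (Real.exp (-p) - 1)))
          ≤ ∑ l ∈ Jᶜ, Real.exp 1 * a l x := by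
        apply Finset.sum_le_sum
        intro l _
        have := haterm l
        have := hbterm l
        linarith
      have h3 : (∑ k ∈ J, Real.exp 1 * a k x) + (∑ l ∈ Jᶜ, Real.exp 1 * a l x)
          = Real.exp 1 * (∑ i, a i x) := by
        rw [Finset.sum_add_sum_compl, Finset.mul_sum]
      linarith
    have : C2 ≤ max C1 C2 := le_max_right _ _
    have hFx : F x = Real.exp N * (∑ Γ ∈ T, r Γ x) + Real.exp 1 * (∑ i, a i x) := rfl
    linarith
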